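/- arXiv:0805.1373 — 3 statements merged into one kernel-verified Lean document; each statement's English description precedes it below -/
import Mathlib

section
/- Let h be a monoid morphism from the free monoid on the two-letter alphabet {0,1} to the free monoid on an alphabet Σ. If h(0)·h(1) ≠ h(1)·h(0), then h is injective on finite binary words: for all finite words a, b over {0,1}, a ≠ b implies h(a) ≠ h(b). -/
namespace Stmt0Aux

variable {S : Type*}

/-- Substitute `false ↦ x`, `true ↦ z` in a binary word and concatenate. -/
def phi (x z : List S) (l : List Bool) : List S :=
  (l.map (fun b => if b then z else x)).flatten

@[simp] lemma phi_nil (x z : List S) : phi x z [] = [] := rfl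

@[simp] lemma phi_cons (x z : List S) (b : Bool) (l : List Bool) :
    phi x z (b :: l) = (if b then z else x) ++ phi x z l := rfl

lemma phi_swap (x z : List S) (l : List Bool) :
    phi z x (l.map not) = phi x z l := by
  induction l with
  | nil => rfl
  | cons b l ih => cases b <;> simp [ih]

/-- Translation corresponding to rewriting the letter `true` (with value `x ++ w`)
as `false` (value `x`) followed by `true` (value `w`). -/
def tr (l : List Bool) : List Bool :=
  (l.map (fun b => if b then [false, true] else [false])).flatten

@[simp] lemma tr_nil : tr [] = [] := rfl

@[simp] lemma tr_cons (b : Bool) (l : List Bool) :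
    tr (b :: l) = (if b then [false, true] else [false]) ++ tr l := rfl

lemma phi_tr (x w : List S) (l : List Bool) :
    phi x w (tr l) = phi x (x ++ w) l := by
  induction l with
  | nil => rfl
  | cons b l ih => cases b <;> simp [ih]

lemma strip (x z : List S) : ∀ a b : List Bool, a ≠ b → phi x z a = phi x z b →
    (x = [] ∨ z = []) ∨ ∃ a' b', x ++ phi x z a' = z ++ phi x z b' := by
  intro a
  induction a with
  | nil =>
    rintro (_ | ⟨d, b⟩) hab he
    · exact absurd rfl hab
    · cases d
      · left; left
        have := he.symm
        simp only [phi_cons, if_neg, phi_nil] at this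
        simpa using List.append_eq_nil_iff.mp (by simpa using this) |>.1
      · left; right
        simpa using (List.append_eq_nil_iff.mp (by simpa using he.symm)).1
  | cons c a ih =>
    rintro (_ | ⟨d, b⟩) hab he
    · cases c
      · left; left
        simpa using (List.append_eq_nil_iff.mp (by simpa using he)).1
      · left; right
        simpa using (List.append_eq_nil_iff.mp (by simpa using he)).1
    · by_cases hcd : c = d
      · subst hcd
        simp only [phi_cons] at he
        have he' : phi x z a = phi x z b := List.append_cancel_left he
        exact ih b (by simpa using hab) he'
      · cases c
        · have hd : d = true := by cases d <;> simp_all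
          subst hd
          right
          exact ⟨a, b, by simpa using he⟩
        · have hd : d = false := by cases d <;> simp_all
          subst hd
          right
          exact ⟨b, a, by simpa using he.symm⟩

lemma key : ∀ n (x z : List S), x.length + z.length ≤ n →
    (∃ a b : List Bool, a ≠ b ∧ phi x z a = phi x z b) → x ++ z = z ++ x := by
  intro n
  induction n with
  | zero =>
    intro x z hn _
    have hx : x = [] := by
      cases x with
      | nil => rfl
      | cons _ _ => simp at hn
    simp [hx]
  | succ n ih =>
    have core : ∀ x z : List S, x.length + z.length ≤ n + 1 → x.length ≤ z.length →
        (∃ a b : List Bool, a ≠ b ∧ phi x z a = phi x z b) → x ++ z = z ++ x := by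
      rintro x z hn hle ⟨a, b, hab, he⟩
      rcases strip x z a b hab he with (hx | hz) | ⟨a', b', heq⟩
      · simp [hx]
      · simp [hz]
      · by_cases hx0 : x = []
        · simp [hx0]
        · -- x is a prefix of z
          have hpx : x <+: z ++ phi x z b' := ⟨phi x z a', heq⟩
          have hxz : x <+: z :=
            List.prefix_of_prefix_length_le hpx (List.prefix_append _ _) hle
          obtain ⟨w, hw⟩ := hxz
          have hcan : phi x z a' = w ++ phi x z b' := by
            apply List.append_cancel_left (as := x)
            rw [heq, ← hw, List.append_assoc]
          -- rewrite relations over the alphabet {x, w}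
          have hphi : ∀ l, phi x w (tr l) = phi x z l := by
            intro l; rw [phi_tr, hw]
          cases a' with
          | nil =>
            have hwnil : w = [] := by
              have := hcan.symm
              simp only [phi_nil] at this
              exact (List.append_eq_nil_iff.mp this).1
            have : z = x := by rw [← hw, hwnil, List.append_nil]
            rw [this]
          | cons c a'' =>
            have hrel : phi x w (tr (c :: a'')) = phi x w (true :: tr b') := by
              rw [hphi, hcan, phi_cons, if_pos rfl, hphi]
            have hne : tr (c :: a'') ≠ true :: tr b' := by
              cases c <;> simp [tr_cons]
            have hlen : x.length + w.length ≤ n := by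
              have hzlen : z.length = x.length + w.length := by
                rw [← hw, List.length_append]
              have hx1 : 1 ≤ x.length := by
                cases x with
                | nil => exact absurd rfl hx0
                | cons _ _ => simp
              omega
            have hcw : x ++ w = w ++ x := ih x w hlen ⟨_, _, hne, hrel⟩
            calc x ++ z = x ++ (x ++ w) := by rw [hw]
              _ = x ++ (w ++ x) := by rw [hcw]
              _ = (x ++ w) ++ x := by rw [List.append_assoc]
              _ = z ++ x := by rw [hw]
    rintro x z hn ⟨a, b, hab, he⟩
    rcases le_total x.length z.length with hle | hle
    · exact core x z hn hle ⟨a, b, hab, he⟩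
    · have hne : a.map not ≠ b.map not := by
        intro hmap
        apply hab
        have := congrArg (List.map not) hmap
        simp only [List.map_map] at this
        simpa [Function.comp_def, Bool.not_not] using this
      have : phi z x (a.map not) = phi z x (b.map not) := by
        rw [phi_swap, phi_swap]; exact he
      exact (core z x (by omega) hle ⟨_, _, hne, this⟩).symm

end Stmt0Aux

theorem stmt_0 {S : Type*} (h : FreeMonoid Bool →* FreeMonoid S)
    (hcomm : h (FreeMonoid.of false) * h (FreeMonoid.of true) ≠
      h (FreeMonoid.of true) * h (FreeMonoid.of false)) :
    ∀ a b : FreeMonoid Bool, a ≠ b → h a ≠ h b := by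
  classical
  set x : List S := FreeMonoid.toList (h (FreeMonoid.of false)) with hx
  set z : List S := FreeMonoid.toList (h (FreeMonoid.of true)) with hz
  have happ : ∀ a : List Bool,
      FreeMonoid.toList (h (FreeMonoid.ofList a)) = Stmt0Aux.phi x z a := by
    intro a
    induction a with
    | nil => simp [Stmt0Aux.phi]
    | cons c a ih =>
      have : FreeMonoid.ofList (c :: a) = FreeMonoid.of c * FreeMonoid.ofList a := by
        rfl
      rw [this, map_mul, FreeMonoid.toList_mul, ih, Stmt0Aux.phi_cons]
      cases c <;> simp [hx, hz]
  intro a b hab heq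
  apply hcomm
  have hne : FreeMonoid.toList a ≠ FreeMonoid.toList b := by
    intro hh; exact hab (FreeMonoid.toList.injective hh)
  have hrel : Stmt0Aux.phi x z (FreeMonoid.toList a) = Stmt0Aux.phi x z (FreeMonoid.toList b) := by
    rw [← happ, ← happ, FreeMonoid.ofList_toList, FreeMonoid.ofList_toList, heq]
  have hc := Stmt0Aux.key (x.length + z.length) x z le_rfl ⟨_, _, hne, hrel⟩
  apply FreeMonoid.toList.injective
  rw [FreeMonoid.toList_mul, FreeMonoid.toList_mul]
  exact hc.symm ▸ hc.symm
end

section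
/- Let h be a monoid morphism from the free monoid on the two-letter alphabet {0,1} to the free monoid on an alphabet Σ. Write x = h(0) and y = h(1). If |x| = 1, |y| = 2, and y ≠ x·x, then h is injective on finite binary words: for all finite words a, b over {0,1}, a ≠ b implies h(a) ≠ h(b). -/
open FreeMonoid

private lemma fm_cases {α : Type*} (a : FreeMonoid α) :
    a = 1 ∨ ∃ c t, a = FreeMonoid.of c * t := by
  rcases hl : a.toList with _ | ⟨c, t⟩
  · left
    have := congrArg FreeMonoid.ofList hl
    rwa [FreeMonoid.ofList_toList] at this
  · right
    refine ⟨c, FreeMonoid.ofList t, ?_⟩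
    have := congrArg FreeMonoid.ofList hl
    rw [FreeMonoid.ofList_toList] at this
    exact this

theorem stmt_2 {S : Type*} (h : FreeMonoid Bool →* FreeMonoid S)
    (hx : (h (FreeMonoid.of false)).length = 1)
    (hy : (h (FreeMonoid.of true)).length = 2)
    (hne : h (FreeMonoid.of true) ≠ h (FreeMonoid.of false) * h (FreeMonoid.of false)) :
    ∀ a b : FreeMonoid Bool, a ≠ b → h a ≠ h b := by
  -- extract letters
  obtain ⟨c, hc⟩ := FreeMonoid.length_eq_one.mp hx
  obtain ⟨d, e, hde⟩ : ∃ d e, h (FreeMonoid.of true) = FreeMonoid.of d * FreeMonoid.of e := by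
    have hlen : (FreeMonoid.toList (h (FreeMonoid.of true))).length = 2 := hy
    rcases hl : (h (FreeMonoid.of true)).toList with _ | ⟨d, t⟩
    · rw [hl] at hlen; simp at hlen
    · rcases t with _ | ⟨e, t'⟩
      · rw [hl] at hlen; simp at hlen
      · rcases t' with _ | ⟨f, t''⟩
        · refine ⟨d, e, ?_⟩
          have := congrArg FreeMonoid.ofList hl
          rw [FreeMonoid.ofList_toList] at this
          exact this
        · rw [hl] at hlen; simp at hlen
  -- the key injectivity by strong induction
  suffices H : ∀ n (a b : FreeMonoid Bool), a.length ≤ n → h a = h b → a = b by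
    intro a b hab heq
    exact hab (H a.length a b le_rfl heq)
  -- head of h a is c (if starts with false) or d (if starts with true)
  have headf : ∀ (t : FreeMonoid Bool), (h (FreeMonoid.of false * t)).toList =
      c :: (h t).toList := by
    intro t
    rw [map_mul, hc]
    rfl
  have headt : ∀ (t : FreeMonoid Bool), (h (FreeMonoid.of true * t)).toList =
      d :: e :: (h t).toList := by
    intro t
    rw [map_mul, hde]
    rfl
  -- mixed heads impossible
  have mixed : ∀ (a' b' : FreeMonoid Bool),
      h (FreeMonoid.of false * a') ≠ h (FreeMonoid.of true * b') := by
    intro a' b' heq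
    have hl := congrArg FreeMonoid.toList heq
    rw [headf, headt] at hl
    have hdc : d = c := ((List.cons.injEq _ _ _ _).mp hl |>.1).symm
    have htail : (h a').toList = e :: (h b').toList :=
      (List.cons.injEq _ _ _ _).mp hl |>.2
    have hec : e ≠ c := by
      intro hec
      apply hne
      rw [hde, hc, hdc, hec]
    rcases fm_cases a' with rfl | ⟨c', t, rfl⟩
    · simp [FreeMonoid.toList_one] at htail
    · cases c'
      · rw [headf] at htail
        exact hec ((List.cons.injEq _ _ _ _).mp htail).1.symm
      · rw [headt] at htail
        have : d = e := ((List.cons.injEq _ _ _ _).mp htail).1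
        exact hec (hdc ▸ this.symm)
  intro n
  induction n with
  | zero =>
    intro a b ha heq
    rcases fm_cases a with rfl | ⟨ca, ta, rfl⟩
    · rcases fm_cases b with rfl | ⟨cb, tb, rfl⟩
      · rfl
      · exfalso
        have hb0 : h (1 : FreeMonoid Bool) = 1 := map_one h
        have := congrArg FreeMonoid.length (heq.symm.trans hb0)
        cases cb
        · rw [map_mul, hc] at this
          simp [FreeMonoid.length_mul] at this
        · rw [map_mul, hde] at this
          simp [FreeMonoid.length_mul] at this
    · exfalso
      rw [FreeMonoid.length_mul, FreeMonoid.length_of] at ha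
      omega
  | succ n ih =>
    intro a b ha heq
    rcases fm_cases a with rfl | ⟨ca, ta, rfl⟩
    · rcases fm_cases b with rfl | ⟨cb, tb, rfl⟩
      · rfl
      · exfalso
        have hb0 : h (1 : FreeMonoid Bool) = 1 := map_one h
        have := congrArg FreeMonoid.length (heq.symm.trans hb0)
        cases cb
        · rw [map_mul, hc] at this
          simp [FreeMonoid.length_mul] at this
        · rw [map_mul, hde] at this
          simp [FreeMonoid.length_mul] at this
    · rcases fm_cases b with rfl | ⟨cb, tb, rfl⟩
      · exfalso
        have hb0 : h (1 : FreeMonoid Bool) = 1 := map_one h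
        have := congrArg FreeMonoid.length (heq.trans hb0)
        cases ca
        · rw [map_mul, hc] at this
          simp [FreeMonoid.length_mul] at this
        · rw [map_mul, hde] at this
          simp [FreeMonoid.length_mul] at this
      · have hta : ta.length ≤ n := by
          rw [FreeMonoid.length_mul, FreeMonoid.length_of] at ha
          omega
        cases ca <;> cases cb
        · -- false false
          have : h ta = h tb := by
            have := heq
            rw [map_mul, map_mul] at this
            exact mul_left_cancel this
          rw [ih ta tb hta this]
        · exact absurd heq (mixed ta tb)
        · exact absurd heq.symm (mixed tb ta)
        · have : h ta = h tb := by
            have := heq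
            rw [map_mul, map_mul] at this
            exact mul_left_cancel this
          rw [ih ta tb hta this]
end

section
/- Let w : ℕ → {0,1} be an infinite binary word that is not ultimately periodic, and let h be a monoid morphism from finite binary words to finite words over an alphabet Σ. Suppose there exist finite words y and z over Σ with z nonempty such that for every n, the word h(w(0))·h(w(1))⋯h(w(n−1)) is a prefix of y·z^t for some natural number t (i.e., the image of w under h is ultimately periodic, equal to y·z^ω). Then h(0)·h(1) = h(1)·h(0), i.e., h(0) commutes with h(1). -/
namespace Stmt8Aux

variable {S : Type*}

def Agrees (T : ℕ → S) (l : List S) : Prop := ∀ i, (hi : i < l.length) → l[i] = T i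

lemma Agrees.append_left {T : ℕ → S} {a b : List S} (h : Agrees T (a ++ b)) : Agrees T a := by
  intro i hi
  have h2 := h i (by simp; omega)
  rwa [List.getElem_append_left] at h2

lemma Agrees.shift {T : ℕ → S} {a b : List S} (h : Agrees T (a ++ b)) :
    Agrees (fun m => T (a.length + m)) b := by
  intro i hi
  have h2 := h (a.length + i) (by simp; omega)
  rw [List.getElem_append_right (by omega)] at h2
  simpa using h2

lemma Agrees.eq_of_length_eq {T : ℕ → S} {a b : List S} (ha : Agrees T a) (hb : Agrees T b)
    (h : a.length = b.length) : a = b := by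
  apply List.ext_getElem h
  intro i h1 h2
  rw [ha i h1, hb i h2]

lemma Agrees.take_eq {T : ℕ → S} {a b : List S} (ha : Agrees T a) (hb : Agrees T b)
    (h : a.length ≤ b.length) : b.take a.length = a := by
  refine Agrees.eq_of_length_eq ?_ ha (by simp; omega)
  intro i hi
  have hi' : i < b.length := by simp at hi; omega
  rw [List.getElem_take]
  exact hb i hi'

def prodL (u v : List S) (l : List Bool) : List S := l.flatMap (fun b => if b then v else u)

@[simp] lemma prodL_nil (u v : List S) : prodL u v [] = [] := rfl

@[simp] lemma prodL_cons (u v : List S) (b : Bool) (l : List Bool) :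
    prodL u v (b :: l) = (if b then v else u) ++ prodL u v l := rfl

lemma prodL_map_not (u v : List S) (l : List Bool) :
    prodL v u (l.map not) = prodL u v l := by
  induction l with
  | nil => rfl
  | cons b l ih => cases b <;> simp [ih]

def tr : List Bool → List Bool := fun l => l.flatMap (fun b => if b then [false, true] else [false])

lemma prodL_tr (u vb : List S) (l : List Bool) : prodL u vb (tr l) = prodL u (u ++ vb) l := by
  induction l with
  | nil => rfl
  | cons b l ih => cases b <;> simp [tr, prodL, List.flatMap_cons, ih, prodL_cons] <;>
      simp [prodL, tr] at ih ⊢ <;> simp [ih, List.append_assoc]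

def EmitsF (u v : List S) (T : ℕ → S) (c : Bool) : Prop :=
  ∀ N, ∃ l : List Bool, N ≤ (prodL u v (c :: l)).length ∧ Agrees T (prodL u v (c :: l))

lemma emitsF_swap {u v : List S} {T : ℕ → S} {c : Bool} (H : EmitsF u v T c) :
    EmitsF v u T (!c) := by
  intro N
  obtain ⟨l, h1, h2⟩ := H N
  have he : prodL v u ((!c) :: l.map not) = prodL u v (c :: l) := by
    have := prodL_map_not u v (c :: l)
    simpa using this
  exact ⟨l.map not, by rw [he]; exact h1, by rw [he]; exact h2⟩

lemma key : ∀ n : ℕ, ∀ u v : List S, ∀ T : ℕ → S, u.length + v.length ≤ n →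
    EmitsF u v T false → EmitsF u v T true → u ++ v = v ++ u := by
  intro n
  induction n using Nat.strong_induction_on with
  | _ n IH =>
  have core : ∀ u v : List S, ∀ T : ℕ → S, u.length + v.length ≤ n → u.length ≤ v.length →
      EmitsF u v T false → EmitsF u v T true → u ++ v = v ++ u := by
    intro u v T hn hle hf ht
    have hAu : Agrees T u := by
      obtain ⟨l, _, hA⟩ := hf 0
      rw [prodL_cons] at hA
      simpa using hA.append_left
    have hAv : Agrees T v := by
      obtain ⟨l, _, hA⟩ := ht 0
      rw [prodL_cons] at hA
      simpa using hA.append_left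
    rcases eq_or_ne u [] with hu | hu
    · simp [hu]
    rcases lt_or_eq_of_le hle with hlt | heq
    swap
    · have : u = v := hAu.eq_of_length_eq hAv heq
      rw [this]
    have hvtake : v.take u.length = u := hAu.take_eq hAv hle
    set vb := v.drop u.length with hvbdef
    have hv : v = u ++ vb := by
      conv_lhs => rw [← List.take_append_drop u.length v]
      rw [hvtake]
    have hupos : 0 < u.length := List.length_pos_iff.mpr hu
    set T2 : ℕ → S := fun m => T (u.length + m) with hT2
    have hf2 : EmitsF u vb T2 false := by
      intro N
      obtain ⟨l, hlen, hA⟩ := hf (N + u.length + 1)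
      rw [prodL_cons, if_neg (by simp)] at hlen hA
      have hlne : l ≠ [] := by
        intro hc; subst hc; simp at hlen
      obtain ⟨b, l2, rfl⟩ := List.exists_cons_of_ne_nil hlne
      obtain ⟨t, htr⟩ : ∃ t, tr (b :: l2) = false :: t := by
        cases b <;> exact ⟨_, rfl⟩
      have hpp : prodL u vb (false :: t) = prodL u v (b :: l2) := by
        rw [← htr, prodL_tr, ← hv]
      refine ⟨t, ?_, ?_⟩
      · rw [hpp]
        simp at hlen ⊢; omega
      · rw [hpp]; exact hA.shift
    have ht2 : EmitsF u vb T2 true := by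
      intro N
      obtain ⟨l, hlen, hA⟩ := ht (N + u.length)
      rw [prodL_cons, if_pos rfl] at hlen hA
      rw [hv, List.append_assoc] at hlen hA
      have hpp : prodL u vb (true :: tr l) = vb ++ prodL u (u ++ vb) l := by
        rw [prodL_cons, if_pos rfl, prodL_tr]
      refine ⟨tr l, ?_, ?_⟩
      · rw [hpp]
        simp at hlen ⊢; omega
      · rw [hpp]; exact hA.shift
    have hrec : u ++ vb = vb ++ u := by
      have hm : u.length + vb.length < n := by
        have h2 : v.length = u.length + vb.length := by rw [hv]; simp
        omega
      exact IH _ hm u vb T2 le_rfl hf2 ht2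
    rw [hv, List.append_assoc, ← hrec]
  intro u v T hn hf ht
  rcases le_total u.length v.length with hc | hc
  · exact core u v T hn hc hf ht
  · exact (core v u T (by omega) hc (emitsF_swap ht) (emitsF_swap hf)).symm

end Stmt8Aux


open Stmt8Aux in
theorem stmt_8 {S : Type*} (w : ℕ → Bool)
    (hw : ¬ ∃ N : ℕ, ∃ p : ℕ, 0 < p ∧ ∀ n ≥ N, w (n + p) = w n)
    (h : FreeMonoid Bool →* FreeMonoid S)
    (y z : FreeMonoid S) (hz : z ≠ 1)
    (hpref : ∀ n : ℕ, ∃ t : ℕ, ∃ s : FreeMonoid S,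
      h (FreeMonoid.ofList (List.ofFn fun i : Fin n => w i)) * s = y * z ^ t) :
    h (FreeMonoid.of false) * h (FreeMonoid.of true) =
      h (FreeMonoid.of true) * h (FreeMonoid.of false) := by
  classical
  set f : Bool → List S := fun b => FreeMonoid.toList (h (FreeMonoid.of b)) with hfdef
  suffices hmain : f false ++ f true = f true ++ f false by
    apply FreeMonoid.toList.injective
    simpa [FreeMonoid.toList_mul, hfdef] using hmain
  rcases eq_or_ne (f false) [] with hu | hu
  · simp [hu]
  rcases eq_or_ne (f true) [] with hv0 | hv0
  · simp [hv0]
  have hfpos : ∀ b, 0 < (f b).length := by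
    intro b; cases b
    · exact List.length_pos_iff.mpr hu
    · exact List.length_pos_iff.mpr hv0
  have hlist : ∀ l : List Bool, FreeMonoid.toList (h (FreeMonoid.ofList l)) = l.flatMap f := by
    intro l
    induction l with
    | nil => simp [FreeMonoid.ofList_nil, map_one, FreeMonoid.toList_one]
    | cons b l ih => rw [FreeMonoid.ofList_cons, map_mul, FreeMonoid.toList_mul, ih]; rfl
  set P : ℕ → List S := fun n => (List.ofFn fun i : Fin n => w i).flatMap f with hPdef
  set L : ℕ → ℕ := fun n => (P n).length with hLdef
  have hofFn_add : ∀ a m : ℕ, (List.ofFn fun i : Fin (a + m) => w i) =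
      (List.ofFn fun i : Fin a => w i) ++ (List.ofFn fun t : Fin m => w (a + t)) := by
    intro a m
    rw [List.ofFn_add]
    rfl
  have hPadd : ∀ a m : ℕ, P (a + m) = P a ++ (List.ofFn fun t : Fin m => w (a + t)).flatMap f := by
    intro a m
    simp only [hPdef, hofFn_add a m, List.flatMap_append]
  have hflat_len : ∀ l : List Bool, l.length ≤ (l.flatMap f).length := by
    intro l; induction l with
    | nil => simp
    | cons b l ih =>
        simp only [List.flatMap_cons, List.length_append, List.length_cons]
        have := hfpos b; omega
  have hLle : ∀ a m : ℕ, L a ≤ L (a + m) := by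
    intro a m; simp only [hLdef, hPadd a m, List.length_append]; omega
  have hLge : ∀ n, n ≤ L n := by
    intro n
    simp only [hLdef, hPdef]
    have := hflat_len (List.ofFn fun i : Fin n => w i)
    simpa using this
  set ytl := FreeMonoid.toList y with hytl
  set p := (FreeMonoid.toList z).length with hpdef
  have hzne : FreeMonoid.toList z ≠ [] := by
    intro hc
    exact hz (by rw [← FreeMonoid.ofList_toList z, hc, FreeMonoid.ofList_nil])
  have hp : 0 < p := List.length_pos_iff.mpr hzne
  set d : S := (FreeMonoid.toList z).head hzne with hd
  have hlenpow : ∀ t, (FreeMonoid.toList (z ^ t)).length = t * p := by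
    intro t; induction t with
    | zero => simp [pow_zero, FreeMonoid.toList_one]
    | succ t ih => rw [pow_succ, FreeMonoid.toList_mul, List.length_append, ih]; ring
  have hlenyz : ∀ t, (FreeMonoid.toList (y * z ^ t)).length = ytl.length + t * p := by
    intro t; rw [FreeMonoid.toList_mul, List.length_append, hlenpow]
  have hchain : ∀ t t' : ℕ, t ≤ t' →
      FreeMonoid.toList (y * z ^ t) <+: FreeMonoid.toList (y * z ^ t') := by
    intro t t' htt
    obtain ⟨c, rfl⟩ := Nat.exists_eq_add_of_le htt
    rw [pow_add, ← mul_assoc, FreeMonoid.toList_mul]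
    exact List.prefix_append _ _
  set U : ℕ → S := fun k => (FreeMonoid.toList (y * z ^ (k + 1))).getD k d with hUdef
  have hgetD_eq : ∀ t t' k : ℕ, k < (FreeMonoid.toList (y * z ^ t)).length →
      k < (FreeMonoid.toList (y * z ^ t')).length →
      (FreeMonoid.toList (y * z ^ t)).getD k d = (FreeMonoid.toList (y * z ^ t')).getD k d := by
    have haux : ∀ t t' k : ℕ, t ≤ t' → k < (FreeMonoid.toList (y * z ^ t)).length →
        (FreeMonoid.toList (y * z ^ t)).getD k d = (FreeMonoid.toList (y * z ^ t')).getD k d := by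
      intro t t' k htt hk
      have hpre := hchain t t' htt
      have hk' : k < (FreeMonoid.toList (y * z ^ t')).length := lt_of_lt_of_le hk hpre.length_le
      rw [List.getD_eq_getElem _ _ hk, List.getD_eq_getElem _ _ hk', hpre.getElem]
    intro t t' k h1 h2
    rcases le_total t t' with hc | hc
    · exact haux t t' k hc h1
    · exact (haux t' t k hc h2).symm
  have hUget : ∀ t k : ℕ, k < (FreeMonoid.toList (y * z ^ t)).length →
      U k = (FreeMonoid.toList (y * z ^ t)).getD k d := by
    intro t k hk
    have hk1 : k < (FreeMonoid.toList (y * z ^ (k + 1))).length := by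
      rw [hlenyz]
      have : k + 1 ≤ (k + 1) * p := Nat.le_mul_of_pos_right _ hp
      omega
    exact hgetD_eq (k + 1) t k hk1 hk
  have hUagrees : ∀ n, Agrees U (P n) := by
    intro n i hi
    obtain ⟨t, s, heq⟩ := hpref n
    have htl : FreeMonoid.toList (y * z ^ t) = P n ++ FreeMonoid.toList s := by
      rw [← heq, FreeMonoid.toList_mul, hlist]
    have hilen : i < (FreeMonoid.toList (y * z ^ t)).length := by
      rw [htl, List.length_append]; omega
    rw [hUget t i hilen, htl, List.getD_append _ _ _ _ hi, List.getD_eq_getElem _ _ hi]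
  have hper : ∀ k, ytl.length ≤ k → U (k + p) = U k := by
    intro k hk
    have hkp1 : k + 1 ≤ (k + 1) * p := Nat.le_mul_of_pos_right _ hp
    have e2 : U (k + p) = (FreeMonoid.toList (y * z ^ (k + 2))).getD (k + p) d := by
      apply hUget
      rw [hlenyz]
      have h2 : (k + 2) * p = (k + 1) * p + p := by ring
      omega
    have e1 : U k = (FreeMonoid.toList (y * z ^ (k + 1))).getD k d := rfl
    have hsplit2 : FreeMonoid.toList (y * z ^ (k + 2)) =
        ytl ++ (FreeMonoid.toList z ++ FreeMonoid.toList (z ^ (k + 1))) := by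
      have : z ^ (k + 2) = z * z ^ (k + 1) := by rw [← pow_succ']
      rw [this, FreeMonoid.toList_mul, FreeMonoid.toList_mul]
    have hsplit1 : FreeMonoid.toList (y * z ^ (k + 1)) =
        ytl ++ FreeMonoid.toList (z ^ (k + 1)) := by
      rw [FreeMonoid.toList_mul]
    rw [e1, e2, hsplit1, hsplit2,
      List.getD_append_right _ _ _ _ (by omega),
      List.getD_append_right _ _ _ _ (by omega : (FreeMonoid.toList z).length ≤ k + p - ytl.length),
      List.getD_append_right _ _ _ _ hk]
    congr 1
    omega
  have hperc : ∀ c k, ytl.length ≤ k → U (k + c * p) = U k := by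
    intro c
    induction c with
    | zero => intro k _; simp
    | succ c ih =>
        intro k hk
        have h1 : k + (c + 1) * p = (k + c * p) + p := by ring
        rw [h1, hper _ (by omega), ih k hk]
  -- pigeonhole for residues
  have hpig : ∃ i j : ℕ, ytl.length ≤ i ∧ i < j ∧ L i % p = L j % p := by
    have hmaps : ∀ a ∈ Finset.range (p + 1), (L (ytl.length + a)) % p ∈ Finset.range p := by
      intro a _; simp [Nat.mod_lt _ hp]
    obtain ⟨a, ha, b, hb, hab, heqm⟩ :=
      Finset.exists_ne_map_eq_of_card_lt_of_maps_to (by simp) hmaps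
    rcases lt_or_gt_of_ne hab with hlt | hlt
    · exact ⟨ytl.length + a, ytl.length + b, by omega, by omega, heqm⟩
    · exact ⟨ytl.length + b, ytl.length + a, by omega, by omega, heqm.symm⟩
  obtain ⟨i, j, hiy, hij, hres⟩ := hpig
  -- a position where the two tails differ
  have hexk : ∃ k, w (i + k) ≠ w (j + k) := by
    by_contra hcon
    push_neg at hcon
    apply hw
    refine ⟨i, j - i, by omega, ?_⟩
    intro n hn
    have h1 : n + (j - i) = j + (n - i) := by omega
    rw [h1, ← hcon (n - i)]
    congr 1
    omega
  set k := Nat.find hexk with hkdef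
  have hk : w (i + k) ≠ w (j + k) := Nat.find_spec hexk
  have hmin : ∀ t, t < k → w (i + t) = w (j + t) := by
    intro t ht
    have := Nat.find_min hexk ht
    simpa using this
  have hseg : (List.ofFn fun t : Fin k => w (i + t)) = (List.ofFn fun t : Fin k => w (j + t)) := by
    congr 1
    funext t
    exact hmin t t.isLt
  set c := ((List.ofFn fun t : Fin k => w (i + t)).flatMap f).length with hcdef
  have hLik : L (i + k) = L i + c := by
    simp only [hLdef, hPadd i k, List.length_append, hcdef]
  have hLjk : L (j + k) = L j + c := by
    simp only [hLdef, hPadd j k, List.length_append, hcdef, hseg]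
  have hLij : L i ≤ L j := by
    have := hLle i (j - i)
    have h1 : i + (j - i) = j := by omega
    rwa [h1] at this
  obtain ⟨e, he⟩ : ∃ e, L j = L i + e * p := by
    have h2 : (L j - L i) % p = 0 := Nat.sub_mod_eq_zero_of_mod_eq hres.symm
    have h3 : p ∣ (L j - L i) := Nat.dvd_of_mod_eq_zero h2
    exact ⟨(L j - L i) / p, by rw [Nat.div_mul_cancel h3]; omega⟩
  have hyLi : ytl.length ≤ L i := le_trans hiy (hLge i)
  set T : ℕ → S := fun m => U (L (i + k) + m) with hTdef
  have hTshift : ∀ m, U (L (j + k) + m) = T m := by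
    intro m
    have h1 : L (j + k) + m = (L i + c + m) + e * p := by rw [hLjk, he]; ring
    have h2 : L (i + k) + m = L i + c + m := by rw [hLik]
    rw [hTdef]
    simp only []
    rw [h1, h2, hperc e _ (by omega)]
  -- the image function coincides with prodL's letters
  have himg : (fun b : Bool => if b then f true else f false) = f := by
    funext b; cases b <;> rfl
  have hemit : ∀ a : ℕ, (∀ m, U (L a + m) = T m) → EmitsF (f false) (f true) T (w a) := by
    intro a hTa N
    refine ⟨List.ofFn (fun t : Fin N => w (a + 1 + t)), ?_, ?_⟩ <;>
      rw [show prodL (f false) (f true) ((w a) :: List.ofFn fun t : Fin N => w (a + 1 + t)) =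
          (List.ofFn fun t : Fin (N + 1) => w (a + t)).flatMap f from by
        rw [prodL, himg]
        congr 1
        rw [List.ofFn_succ]
        congr 1
        congr 1
        funext t
        congr 1
        simp only [Fin.val_succ]
        omega]
    · have h1 := hflat_len (List.ofFn fun t : Fin (N + 1) => w (a + t))
      simp only [List.length_ofFn] at h1
      omega
    · intro m hm
      have hA := hUagrees (a + (N + 1))
      rw [hPadd a (N + 1)] at hA
      have h3 := hA.shift
      rw [← hTa m]
      exact h3 m hm
  have hemiti := hemit (i + k) (fun m => rfl)
  have hemitj := hemit (j + k) hTshift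
  cases hwik : w (i + k)
  · have hwjk : w (j + k) = true := by
      cases hwjk : w (j + k)
      · rw [hwik, hwjk] at hk; simp at hk
      · rfl
    rw [hwik] at hemiti
    rw [hwjk] at hemitj
    exact key ((f false).length + (f true).length) _ _ T le_rfl hemiti hemitj
  · have hwjk : w (j + k) = false := by
      cases hwjk : w (j + k)
      · rfl
      · rw [hwik, hwjk] at hk; simp at hk
    rw [hwik] at hemiti
    rw [hwjk] at hemitj
    exact key ((f false).length + (f true).length) _ _ T le_rfl hemitj hemiti
end
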